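/- Let (G₁,ν₁) and (G₂,ν₂) be connected deformation graphs, each with more than one vertex, with ranks r₁, r₂ and volumes n₁, n₂, and fix a gradation f₁ on G₁. Let G₁ × G₂ be the product graph with vertex set V₁ × V₂, with (g₁,g₂) adjacent to (g₁',g₂') iff either g₂ = g₂' and g₁ adjacent to g₁' in G₁, or g₁ = g₁' and g₂ adjacent to g₂' in G₂, and with connection ν((g₁,g₂),(g₁',g₂)) = ν₁(g₁,g₁'), ν((g₁,g₂),(g₁,g₂')) = (−1)^{f₁(g₁)} ν₂(g₂,g₂'), and ν = 0 on all other pairs. Then (G₁ × G₂, ν) is a deformation graph of rank r₁ + r₂, and its characteristic number χ(G₁ × G₂, ν) = |det A| (for any representation matrix A of the product) equals (r₁ + r₂)^{n₁ n₂}. -/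

import Mathlib

/-- A gradation on a simple graph: adjacent vertices have values differing by ±1. -/
def IsGradation {V : Type*} (G : SimpleGraph V) (f : V → ℤ) : Prop :=
  ∀ ⦃a b : V⦄, G.Adj a b → f a - f b = 1 ∨ f a - f b = -1

/-- A connection on a graph: a symmetric integer function nonzero exactly on edges. -/
def IsConnection {V : Type*} (G : SimpleGraph V) (ν : V → V → ℤ) : Prop :=
  (∀ a b : V, ν a b = ν b a) ∧ ∀ a b : V, ν a b ≠ 0 ↔ G.Adj a b

/-- A deformable connection: `∑_c ν a c * ν c b = 0` for all vertices at distance 2. -/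
def IsDeformable {V : Type*} [Fintype V] (G : SimpleGraph V) (ν : V → V → ℤ) : Prop :=
  ∀ a b : V, G.dist a b = 2 → (∑ c : V, ν a c * ν c b) = 0

-- sign lemmas
lemma sign_sq (m : ℤ) : ((((-1 : ℤˣ) ^ m : ℤˣ) : ℤ))^2 = 1 := by
  rw [← Units.val_pow_eq_pow_val, Int.units_sq]
  rfl

lemma sign_add (m n : ℤ) (h : m - n = 1 ∨ m - n = -1) :
    ((((-1 : ℤˣ) ^ m : ℤˣ) : ℤ)) + (((-1 : ℤˣ) ^ n : ℤˣ) : ℤ) = 0 := by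
  rcases h with h | h
  · have : m = n + 1 := by omega
    subst this
    rw [zpow_add]
    simp [Units.val_mul]
  · have : n = m + 1 := by omega
    subst this
    rw [zpow_add (a := (-1 : ℤˣ)) m 1]
    simp [Units.val_mul]

lemma conn_self {V : Type*} {G : SimpleGraph V} {ν : V → V → ℤ}
    (hcon : IsConnection G ν) (a : V) : ν a a = 0 := by
  by_contra h
  exact G.irrefl ((hcon.2 a a).mp h)

/-- Key: sum vanishes whenever a ≠ b and not adjacent. -/
lemma deform_sum {V : Type*} [Fintype V] {G : SimpleGraph V} {ν : V → V → ℤ}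
    (hcon : IsConnection G ν) (hdef : IsDeformable G ν)
    {a b : V} (hne : a ≠ b) (hadj : ¬ G.Adj a b) :
    (∑ c : V, ν a c * ν c b) = 0 := by
  by_cases h : ∀ c : V, ν a c * ν c b = 0
  · exact Finset.sum_eq_zero fun c _ => h c
  · push_neg at h
    obtain ⟨c, hc⟩ := h
    have h1 : G.Adj a c := (hcon.2 a c).mp (left_ne_zero_of_mul hc)
    have h2 : G.Adj c b := (hcon.2 c b).mp (right_ne_zero_of_mul hc)
    have hw : G.dist a b ≤ 2 := by
      have := G.dist_le (SimpleGraph.Walk.cons h1 (SimpleGraph.Walk.cons h2 SimpleGraph.Walk.nil))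
      simpa using this
    have h0 : G.dist a b ≠ 0 := by
      intro hh
      rcases SimpleGraph.dist_eq_zero_iff_eq_or_not_reachable.mp hh with h | h
      · exact hne h
      · exact h ⟨SimpleGraph.Walk.cons h1 (SimpleGraph.Walk.cons h2 SimpleGraph.Walk.nil)⟩
    have h1' : G.dist a b ≠ 1 := fun hh => hadj (SimpleGraph.dist_eq_one_iff_adj.mp hh)
    exact hdef a b (by omega)

set_option linter.unusedSectionVars false

section
variable {V : Type*} [Fintype V] [DecidableEq V] {G : SimpleGraph V} {ν : V → V → ℤ}

lemma sum_subtype_full (p : V → Prop) [DecidablePred p] (F : V → ℤ)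
    (hF : ∀ w, ¬ p w → F w = 0) :
    (∑ q : {w // p w}, F q.1) = ∑ w : V, F w := by
  rw [← Finset.sum_filter_of_ne (p := p) (fun w _ h => by by_contra hc; exact h (hF w hc))]
  exact (Finset.sum_subtype _ (by simp) F).symm

/-- sum of squares over the opposite level set equals rank -/
lemma sum_sq_level (hcon : IsConnection G ν) {r : ℤ} (hr : ∀ v, (∑ w : V, ν w v ^ 2) = r)
    {g : V → ℤ} (c : ℤ) (v : V) (hv : ∀ w, G.Adj v w → g w = c) :
    (∑ q : {w // g w = c}, ν v q.1 * ν v q.1) = r := by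
  classical
  rw [sum_subtype_full (fun w => g w = c) (fun w => ν v w * ν v w) ?_]
  · rw [← hr v]
    refine Finset.sum_congr rfl fun w _ => ?_
    rw [hcon.1 v w]; ring
  · intro w hw
    by_cases h : ν v w = 0
    · show ν v w * ν v w = 0
      rw [h]; ring
    · exact absurd (hv w ((hcon.2 v w).mp h)) hw

/-- a connected-type rank positivity -/
lemma conn_rank_pos (hcon : IsConnection G ν) (hconn : G.Connected) (hcard : 1 < Fintype.card V)
    {r : ℤ} (hr : ∀ v, (∑ w : V, ν w v ^ 2) = r) : 0 < r := by
  classical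
  have : Nonempty V := Fintype.card_pos_iff.mp (by omega)
  obtain ⟨v⟩ := this
  obtain ⟨u, hu⟩ := Fintype.exists_ne_of_one_lt_card hcard v
  obtain ⟨w⟩ := hconn.preconnected v u
  have hnil : ¬ w.Nil := SimpleGraph.Walk.not_nil_of_ne (Ne.symm hu)
  have hadj : G.Adj v (w.getVert 1) := w.adj_snd hnil
  have hne : ν (w.getVert 1) v ≠ 0 := (hcon.2 _ _).mpr hadj.symm
  have h1 : 1 ≤ ν (w.getVert 1) v ^ 2 := by
    rcases lt_or_gt_of_ne hne with h | h <;> nlinarith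
  calc (0:ℤ) < 1 := one_pos
    _ ≤ ν (w.getVert 1) v ^ 2 := h1
    _ ≤ ∑ x : V, ν x v ^ 2 :=
        Finset.single_le_sum (f := fun x => ν x v ^ 2) (fun i _ => sq_nonneg _)
          (Finset.mem_univ _)
    _ = r := hr v

/-- the two level sets of a 0/1 gradation on a deformation graph have equal size -/
lemma half_split (hcon : IsConnection G ν) {r : ℤ} (hr : ∀ v, (∑ w : V, ν w v ^ 2) = r)
    (hrne : r ≠ 0) {g : V → ℤ} (hg : IsGradation G g) (hg01 : ∀ v, g v = 0 ∨ g v = 1) :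
    Fintype.card {v // g v = 0} = Fintype.card {v // g v = 1} := by
  classical
  set B : Matrix {v // g v = 0} {v // g v = 1} ℤ := fun p q => ν p.1 q.1 with hB
  have hlvl : ∀ (a b : V), G.Adj a b → g a ≠ g b := by
    intro a b hab
    rcases hg hab with h | h <;> omega
  have t1 : (B * B.transpose).trace = r * Fintype.card {v // g v = 0} := by
    rw [Matrix.trace]
    have : ∀ p : {v // g v = 0}, (B * B.transpose).diag p = r := by
      intro p
      simp only [Matrix.diag, Matrix.mul_apply, Matrix.transpose_apply, hB]
      exact sum_sq_level hcon hr 1 p.1 (fun w hw => by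
        have := hlvl _ _ hw; rcases hg01 w with h | h; · exact absurd (p.2.trans h.symm) this
        · exact h)
    rw [Finset.sum_congr rfl (fun p _ => this p)]
    simp [mul_comm]
  have t2 : (B.transpose * B).trace = r * Fintype.card {v // g v = 1} := by
    rw [Matrix.trace]
    have : ∀ q : {v // g v = 1}, (B.transpose * B).diag q = r := by
      intro q
      simp only [Matrix.diag, Matrix.mul_apply, Matrix.transpose_apply, hB]
      have := sum_sq_level hcon hr 0 q.1 (fun w hw => by
        have := hlvl _ _ hw; rcases hg01 w with h | h; · exact h
        · exact absurd (q.2.trans h.symm) this)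
      rw [← this]
      refine Finset.sum_congr rfl fun p _ => ?_
      rw [hcon.1 q.1 p.1]; rfl
    rw [Finset.sum_congr rfl (fun q _ => this q)]
    simp [mul_comm]
  have := Matrix.trace_mul_comm B B.transpose
  rw [t1, t2] at this
  exact_mod_cast mul_left_cancel₀ hrne this

end

section
variable {V : Type*} [Fintype V] [DecidableEq V] {G : SimpleGraph V} {ν : V → V → ℤ}

lemma det_sq (hcon : IsConnection G ν) (hdef : IsDeformable G ν)
    {r : ℤ} (hr : ∀ v, (∑ w : V, ν w v ^ 2) = r)
    {g : V → ℤ} (hg : IsGradation G g) (hg01 : ∀ v, g v = 0 ∨ g v = 1)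
    (e : {p : V // g p = 0} ≃ {p : V // g p = 1}) :
    (Matrix.det (Matrix.of fun (p q : {p : V // g p = 0}) => ν p.1 (e q).1)) ^ 2
      = r ^ Fintype.card {p : V // g p = 0} := by
  classical
  set A : Matrix {p : V // g p = 0} {p : V // g p = 0} ℤ :=
    Matrix.of fun p q => ν p.1 (e q).1 with hA
  have key : A * A.transpose = r • (1 : Matrix {p : V // g p = 0} {p : V // g p = 0} ℤ) := by
    ext p p'
    rw [Matrix.mul_apply]
    have e1 : (∑ q : {p : V // g p = 0}, A p q * A.transpose q p')
        = ∑ q : {p : V // g p = 1}, ν p.1 q.1 * ν p'.1 q.1 := by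
      rw [← Equiv.sum_comp e (fun q : {p : V // g p = 1} => ν p.1 q.1 * ν p'.1 q.1)]
      rfl
    have e2 : (∑ q : {p : V // g p = 1}, ν p.1 q.1 * ν p'.1 q.1)
        = ∑ w : V, ν p.1 w * ν p'.1 w := by
      refine sum_subtype_full (fun w => g w = 1) (fun w => ν p.1 w * ν p'.1 w) fun w hw => ?_
      show ν p.1 w * ν p'.1 w = 0
      by_cases h : ν p.1 w = 0
      · rw [h, zero_mul]
      · exfalso
        have hadj := (hcon.2 p.1 w).mp h
        rcases hg hadj with hd | hd <;> rcases hg01 w with h0 | h0 <;>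
          first
            | (exact hw h0)
            | (rw [p.2, h0] at hd; omega)
    rw [e1, e2]
    by_cases hpp : p = p'
    · subst hpp
      have : (∑ w : V, ν p.1 w * ν p.1 w) = r := by
        rw [← hr p.1]
        exact Finset.sum_congr rfl fun w _ => by rw [hcon.1 p.1 w]; ring
      rw [this]
      simp [Matrix.one_apply]
    · have hne : p.1 ≠ p'.1 := fun h => hpp (Subtype.ext h)
      have hnadj : ¬ G.Adj p.1 p'.1 := by
        intro hadj
        rcases hg hadj with hd | hd <;> rw [p.2, p'.2] at hd <;> omega
      have : (∑ w : V, ν p.1 w * ν p'.1 w) = ∑ w : V, ν p.1 w * ν w p'.1 :=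
        Finset.sum_congr rfl fun w _ => by rw [hcon.1 p'.1 w]
      rw [this, deform_sum hcon hdef hne hnadj]
      simp [Matrix.one_apply, Ne.symm, hpp]
  have hd := congrArg Matrix.det key
  rw [Matrix.det_mul, Matrix.det_transpose, Matrix.smul_eq_diagonal_mul] at hd
  rw [sq, hd, Matrix.det_mul, Matrix.det_one, mul_one, Matrix.det_diagonal]
  simp
end


/-- The product connection on the box product `G₁ □ G₂`, twisted by a gradation `f₁`
on the first factor:  `ν((g₁,g₂),(g₁',g₂)) = ν₁(g₁,g₁')` and
`ν((g₁,g₂),(g₁,g₂')) = (-1)^{f₁ g₁} ν₂(g₂,g₂')`, and `0` on all other pairs. -/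
noncomputable def prodConn {V₁ V₂ : Type*} [DecidableEq V₁] [DecidableEq V₂]
    (f₁ : V₁ → ℤ) (ν₁ : V₁ → V₁ → ℤ) (ν₂ : V₂ → V₂ → ℤ) :
    V₁ × V₂ → V₁ × V₂ → ℤ := fun p q =>
  if p.2 = q.2 then ν₁ p.1 q.1
  else if p.1 = q.1 then (((-1 : ℤˣ) ^ f₁ p.1 : ℤˣ) : ℤ) * ν₂ p.2 q.2
  else 0

section
variable {V₁ V₂ : Type*} [DecidableEq V₁] [DecidableEq V₂]
  (f₁ : V₁ → ℤ) (ν₁ : V₁ → V₁ → ℤ) (ν₂ : V₂ → V₂ → ℤ)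

lemma prodConn_eq₁ {p q : V₁ × V₂} (h : p.2 = q.2) :
    prodConn f₁ ν₁ ν₂ p q = ν₁ p.1 q.1 := if_pos h

lemma prodConn_eq₂ {p q : V₁ × V₂} (h2 : p.2 ≠ q.2) (h1 : p.1 = q.1) :
    prodConn f₁ ν₁ ν₂ p q = (((-1 : ℤˣ) ^ f₁ p.1 : ℤˣ) : ℤ) * ν₂ p.2 q.2 := by
  unfold prodConn; rw [if_neg h2, if_pos h1]

lemma prodConn_eq₀ {p q : V₁ × V₂} (h2 : p.2 ≠ q.2) (h1 : p.1 ≠ q.1) :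
    prodConn f₁ ν₁ ν₂ p q = 0 := by
  unfold prodConn; rw [if_neg h2, if_neg h1]

end

/-- The product of two connected deformation graphs of ranks `r₁, r₂` and volumes
`n₁, n₂` is a deformation graph of rank `r₁ + r₂`, and its characteristic number
(the absolute value of the determinant of any representation matrix) is
`(r₁ + r₂)^(n₁ n₂)`. -/
theorem product_deformation_graph
    {V₁ V₂ : Type*} [Fintype V₁] [Fintype V₂] [DecidableEq V₁] [DecidableEq V₂]
    (G₁ : SimpleGraph V₁) (G₂ : SimpleGraph V₂) (ν₁ : V₁ → V₁ → ℤ) (ν₂ : V₂ → V₂ → ℤ)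
    (hcon₁ : IsConnection G₁ ν₁) (hdef₁ : IsDeformable G₁ ν₁)
    (hconn₁ : G₁.Connected) (hcard₁ : 1 < Fintype.card V₁)
    (hcon₂ : IsConnection G₂ ν₂) (hdef₂ : IsDeformable G₂ ν₂)
    (hconn₂ : G₂.Connected) (hcard₂ : 1 < Fintype.card V₂)
    (r₁ r₂ n₁ n₂ : ℕ)
    (hr₁ : ∀ v : V₁, (∑ w : V₁, ν₁ w v ^ 2) = (r₁ : ℤ))
    (hr₂ : ∀ v : V₂, (∑ w : V₂, ν₂ w v ^ 2) = (r₂ : ℤ))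
    (g₁ : V₁ → ℤ) (hg₁ : IsGradation G₁ g₁) (hg₁01 : ∀ v : V₁, g₁ v = 0 ∨ g₁ v = 1)
    (hn₁ : Fintype.card {v : V₁ // g₁ v = 0} = n₁)
    (g₂ : V₂ → ℤ) (hg₂ : IsGradation G₂ g₂) (hg₂01 : ∀ v : V₂, g₂ v = 0 ∨ g₂ v = 1)
    (hn₂ : Fintype.card {v : V₂ // g₂ v = 0} = n₂)
    (f₁ : V₁ → ℤ) (hf₁ : IsGradation G₁ f₁) :
    IsConnection (G₁.boxProd G₂) (prodConn f₁ ν₁ ν₂) ∧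
    IsDeformable (G₁.boxProd G₂) (prodConn f₁ ν₁ ν₂) ∧
    (∀ p : V₁ × V₂, (∑ q : V₁ × V₂, prodConn f₁ ν₁ ν₂ q p ^ 2) = (r₁ : ℤ) + (r₂ : ℤ)) ∧
    (∀ g : V₁ × V₂ → ℤ, IsGradation (G₁.boxProd G₂) g → (∀ p, g p = 0 ∨ g p = 1) →
      ∀ e : {p : V₁ × V₂ // g p = 0} ≃ {p : V₁ × V₂ // g p = 1},
        (Matrix.det (Matrix.of fun (p q : {p : V₁ × V₂ // g p = 0}) =>
            prodConn f₁ ν₁ ν₂ p.1 (e q).1)).natAbs = (r₁ + r₂) ^ (n₁ * n₂)) := by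
  classical
  -- Part 1 : connection
  have part1 : IsConnection (G₁.boxProd G₂) (prodConn f₁ ν₁ ν₂) := by
    constructor
    · intro p q
      by_cases h2 : p.2 = q.2
      · rw [prodConn_eq₁ f₁ ν₁ ν₂ h2, prodConn_eq₁ f₁ ν₁ ν₂ h2.symm, hcon₁.1]
      · by_cases h1 : p.1 = q.1
        · rw [prodConn_eq₂ f₁ ν₁ ν₂ h2 h1, prodConn_eq₂ f₁ ν₁ ν₂ (Ne.symm h2) h1.symm,
            hcon₂.1 p.2 q.2, h1]
        · rw [prodConn_eq₀ f₁ ν₁ ν₂ h2 h1, prodConn_eq₀ f₁ ν₁ ν₂ (Ne.symm h2) (Ne.symm h1)]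
    · intro p q
      rw [SimpleGraph.boxProd_adj]
      by_cases h2 : p.2 = q.2
      · rw [prodConn_eq₁ f₁ ν₁ ν₂ h2, hcon₁.2]
        constructor
        · exact fun h => Or.inl ⟨h, h2⟩
        · rintro (⟨h, _⟩ | ⟨h, _⟩)
          · exact h
          · rw [h2] at h; exact absurd h (G₂.irrefl)
      · by_cases h1 : p.1 = q.1
        · rw [prodConn_eq₂ f₁ ν₁ ν₂ h2 h1]
          constructor
          · intro h
            refine Or.inr ⟨(hcon₂.2 _ _).mp ?_, h1⟩
            intro h0; apply h; rw [h0, mul_zero]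
          · rintro (⟨_, hc⟩ | ⟨h, _⟩)
            · exact absurd hc h2
            · have h' := (hcon₂.2 _ _).mpr h
              intro h0
              rcases mul_eq_zero.mp h0 with hu | hv
              · exact Units.ne_zero _ hu
              · exact h' hv
        · rw [prodConn_eq₀ f₁ ν₁ ν₂ h2 h1]
          constructor
          · intro h; exact absurd rfl h
          · rintro (⟨_, hc⟩ | ⟨_, hc⟩)
            · exact absurd hc h2
            · exact absurd hc h1
  -- Part 2 : deformable
  have part2 : IsDeformable (G₁.boxProd G₂) (prodConn f₁ ν₁ ν₂) := by
    intro a b hdist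
    have hne : a ≠ b := by
      intro h; subst h; rw [SimpleGraph.dist_self] at hdist; omega
    have hnadj : ¬ (G₁.boxProd G₂).Adj a b := by
      intro h; have := SimpleGraph.dist_eq_one_iff_adj.mpr h; omega
    by_cases h2 : a.2 = b.2
    · have ha1 : a.1 ≠ b.1 := fun h => hne (Prod.ext h h2)
      have hnadj1 : ¬ G₁.Adj a.1 b.1 := fun h =>
        hnadj (SimpleGraph.boxProd_adj.mpr (Or.inl ⟨h, h2⟩))
      have hpt : ∀ c : V₁ × V₂, prodConn f₁ ν₁ ν₂ a c * prodConn f₁ ν₁ ν₂ c b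
          = if c.2 = a.2 then ν₁ a.1 c.1 * ν₁ c.1 b.1 else 0 := by
        intro c
        by_cases hc2 : c.2 = a.2
        · rw [if_pos hc2, prodConn_eq₁ f₁ ν₁ ν₂ hc2.symm,
            prodConn_eq₁ f₁ ν₁ ν₂ (hc2.trans h2)]
        · rw [if_neg hc2]
          have hac : a.2 ≠ c.2 := fun h => hc2 h.symm
          have hcb : c.2 ≠ b.2 := fun h => hc2 (h.trans h2.symm)
          by_cases hc1 : a.1 = c.1
          · by_cases hcb1 : c.1 = b.1
            · exact absurd (hc1.trans hcb1) ha1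
            · rw [prodConn_eq₀ f₁ ν₁ ν₂ hcb hcb1, mul_zero]
          · rw [prodConn_eq₀ f₁ ν₁ ν₂ hac hc1, zero_mul]
      rw [Finset.sum_congr rfl (fun c _ => hpt c), Fintype.sum_prod_type_right]
      have hin : ∀ c₂ : V₂,
          (∑ c₁ : V₁, if c₂ = a.2 then ν₁ a.1 c₁ * ν₁ c₁ b.1 else 0)
            = if c₂ = a.2 then (∑ c₁ : V₁, ν₁ a.1 c₁ * ν₁ c₁ b.1) else 0 := by
        intro c₂; split <;> simp
      rw [Finset.sum_congr rfl (fun c₂ _ => hin c₂),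
        Finset.sum_ite_eq' Finset.univ a.2 (fun _ => ∑ c₁ : V₁, ν₁ a.1 c₁ * ν₁ c₁ b.1)]
      simp [deform_sum hcon₁ hdef₁ ha1 hnadj1]
    · by_cases h1 : a.1 = b.1
      · have hnadj2 : ¬ G₂.Adj a.2 b.2 := fun h =>
          hnadj (SimpleGraph.boxProd_adj.mpr (Or.inr ⟨h, h1⟩))
        have hpt : ∀ c : V₁ × V₂, prodConn f₁ ν₁ ν₂ a c * prodConn f₁ ν₁ ν₂ c b
            = if c.1 = a.1 then ν₂ a.2 c.2 * ν₂ c.2 b.2 else 0 := by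
          intro c
          by_cases hc1 : c.1 = a.1
          · rw [if_pos hc1]
            by_cases hc2a : a.2 = c.2
            · rw [prodConn_eq₁ f₁ ν₁ ν₂ hc2a]
              have e1 : ν₁ a.1 c.1 = 0 := by rw [hc1]; exact conn_self hcon₁ _
              have e2 : ν₂ a.2 c.2 = 0 := by rw [hc2a]; exact conn_self hcon₂ _
              rw [e1, e2, zero_mul, zero_mul]
            · by_cases hcb2 : c.2 = b.2
              · rw [prodConn_eq₁ f₁ ν₁ ν₂ hcb2]
                have e1 : ν₁ c.1 b.1 = 0 := by
                  rw [hc1, ← h1]; exact conn_self hcon₁ _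
                have e2 : ν₂ c.2 b.2 = 0 := by rw [hcb2]; exact conn_self hcon₂ _
                rw [e1, e2, mul_zero, mul_zero]
              · rw [prodConn_eq₂ f₁ ν₁ ν₂ hc2a (hc1.symm),
                  prodConn_eq₂ f₁ ν₁ ν₂ hcb2 (hc1.trans h1)]
                have : (((-1 : ℤˣ) ^ f₁ c.1 : ℤˣ) : ℤ) = (((-1 : ℤˣ) ^ f₁ a.1 : ℤˣ) : ℤ) := by
                  rw [hc1]
                rw [this]
                have hsq := sign_sq (f₁ a.1)
                linear_combination (ν₂ a.2 c.2 * ν₂ c.2 b.2) * hsq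
          · rw [if_neg hc1]
            by_cases hc2a : a.2 = c.2
            · rw [prodConn_eq₀ f₁ ν₁ ν₂
                (show c.2 ≠ b.2 from by rw [← hc2a]; exact h2)
                (show c.1 ≠ b.1 from by rw [← h1]; exact hc1), mul_zero]
            · rw [prodConn_eq₀ f₁ ν₁ ν₂ hc2a (fun h => hc1 h.symm), zero_mul]
        rw [Finset.sum_congr rfl (fun c _ => hpt c), Fintype.sum_prod_type]
        have hin : ∀ c₁ : V₁,
            (∑ c₂ : V₂, if c₁ = a.1 then ν₂ a.2 c₂ * ν₂ c₂ b.2 else 0)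
              = if c₁ = a.1 then (∑ c₂ : V₂, ν₂ a.2 c₂ * ν₂ c₂ b.2) else 0 := by
          intro c₁; split <;> simp
        rw [Finset.sum_congr rfl (fun c₁ _ => hin c₁),
          Finset.sum_ite_eq' Finset.univ a.1 (fun _ => ∑ c₂ : V₂, ν₂ a.2 c₂ * ν₂ c₂ b.2)]
        simp [deform_sum hcon₂ hdef₂ h2 hnadj2]
      · -- mixed case
        set X₁ : ℤ := ν₁ a.1 b.1 * ((((-1 : ℤˣ) ^ f₁ b.1 : ℤˣ) : ℤ) * ν₂ a.2 b.2) with hX₁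
        set X₂ : ℤ := ((((-1 : ℤˣ) ^ f₁ a.1 : ℤˣ) : ℤ) * ν₂ a.2 b.2) * ν₁ a.1 b.1 with hX₂
        have hpt : ∀ c : V₁ × V₂, prodConn f₁ ν₁ ν₂ a c * prodConn f₁ ν₁ ν₂ c b
            = (if c = (b.1, a.2) then X₁ else 0) + (if c = (a.1, b.2) then X₂ else 0) := by
          intro c
          by_cases hc2 : c.2 = a.2
          · have hne2 : c ≠ (a.1, b.2) := by
              intro h; rw [h] at hc2; exact h2 (hc2.symm)
            rw [if_neg hne2, add_zero]
            by_cases hc1 : c.1 = b.1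
            · have : c = (b.1, a.2) := Prod.ext hc1 hc2
              rw [if_pos this]
              rw [prodConn_eq₁ f₁ ν₁ ν₂ hc2.symm,
                prodConn_eq₂ f₁ ν₁ ν₂ (show c.2 ≠ b.2 from by rw [hc2]; exact h2) hc1]
              rw [hX₁, hc1, hc2]
            · have : c ≠ (b.1, a.2) := by
                intro h; rw [h] at hc1; exact hc1 rfl
              rw [if_neg this]
              rw [prodConn_eq₀ f₁ ν₁ ν₂ (show c.2 ≠ b.2 from by rw [hc2]; exact h2) hc1,
                mul_zero]
          · have hne1 : c ≠ (b.1, a.2) := by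
              intro h; rw [h] at hc2; exact hc2 rfl
            rw [if_neg hne1, zero_add]
            by_cases hcb2 : c.2 = b.2
            · by_cases hc1 : c.1 = a.1
              · have : c = (a.1, b.2) := Prod.ext hc1 hcb2
                rw [if_pos this]
                rw [prodConn_eq₂ f₁ ν₁ ν₂ (fun h => hc2 h.symm) hc1.symm,
                  prodConn_eq₁ f₁ ν₁ ν₂ hcb2]
                rw [hX₂, hc1, hcb2]
              · have : c ≠ (a.1, b.2) := by
                  intro h; rw [h] at hc1; exact hc1 rfl
                rw [if_neg this]
                rw [prodConn_eq₀ f₁ ν₁ ν₂ (fun h => hc2 h.symm) (fun h => hc1 h.symm),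
                  zero_mul]
            · have : c ≠ (a.1, b.2) := by
                intro h; rw [h] at hcb2; exact hcb2 rfl
              rw [if_neg this]
              by_cases hc1 : c.1 = a.1
              · rw [prodConn_eq₀ f₁ ν₁ ν₂ hcb2 (show c.1 ≠ b.1 from by rw [hc1]; exact h1),
                  mul_zero]
              · rw [prodConn_eq₀ f₁ ν₁ ν₂ (fun h => hc2 h.symm) (fun h => hc1 h.symm),
                  zero_mul]
        rw [Finset.sum_congr rfl (fun c _ => hpt c), Finset.sum_add_distrib,
          Finset.sum_ite_eq' Finset.univ ((b.1, a.2) : V₁ × V₂) (fun _ => X₁),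
          Finset.sum_ite_eq' Finset.univ ((a.1, b.2) : V₁ × V₂) (fun _ => X₂)]
        simp only [Finset.mem_univ, if_true]
        by_cases hadj1 : G₁.Adj a.1 b.1
        · have hs := sign_add (f₁ a.1) (f₁ b.1) (hf₁ hadj1)
          rw [hX₁, hX₂]
          linear_combination (ν₁ a.1 b.1 * ν₂ a.2 b.2) * hs
        · have : ν₁ a.1 b.1 = 0 := by
            by_contra h; exact hadj1 ((hcon₁.2 _ _).mp h)
          rw [hX₁, hX₂, this]; ring
  -- Part 3 : rank
  have part3 : ∀ p : V₁ × V₂,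
      (∑ q : V₁ × V₂, prodConn f₁ ν₁ ν₂ q p ^ 2) = (r₁ : ℤ) + (r₂ : ℤ) := by
    intro p
    have hpt : ∀ q : V₁ × V₂, prodConn f₁ ν₁ ν₂ q p ^ 2
        = (if q.2 = p.2 then ν₁ q.1 p.1 ^ 2 else 0)
          + (if q.1 = p.1 then ν₂ q.2 p.2 ^ 2 else 0) := by
      intro q
      by_cases h2 : q.2 = p.2
      · rw [if_pos h2, prodConn_eq₁ f₁ ν₁ ν₂ h2]
        by_cases h1 : q.1 = p.1
        · rw [if_pos h1, h1, h2, conn_self hcon₁, conn_self hcon₂]; ring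
        · rw [if_neg h1, add_zero]
      · rw [if_neg h2, zero_add]
        by_cases h1 : q.1 = p.1
        · rw [if_pos h1, prodConn_eq₂ f₁ ν₁ ν₂ h2 h1, mul_pow, sign_sq, one_mul]
        · rw [if_neg h1, prodConn_eq₀ f₁ ν₁ ν₂ h2 h1]; ring
    rw [Finset.sum_congr rfl (fun q _ => hpt q), Finset.sum_add_distrib]
    have e1 : (∑ q : V₁ × V₂, if q.2 = p.2 then ν₁ q.1 p.1 ^ 2 else 0) = (r₁ : ℤ) := by
      rw [Fintype.sum_prod_type_right]
      have hin : ∀ c₂ : V₂, (∑ c₁ : V₁, if c₂ = p.2 then ν₁ c₁ p.1 ^ 2 else 0)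
          = if c₂ = p.2 then (∑ c₁ : V₁, ν₁ c₁ p.1 ^ 2) else 0 := by
        intro c₂; split <;> simp
      rw [Finset.sum_congr rfl (fun c₂ _ => hin c₂),
        Finset.sum_ite_eq' Finset.univ p.2 (fun _ => ∑ c₁ : V₁, ν₁ c₁ p.1 ^ 2)]
      simp [hr₁ p.1]
    have e2 : (∑ q : V₁ × V₂, if q.1 = p.1 then ν₂ q.2 p.2 ^ 2 else 0) = (r₂ : ℤ) := by
      rw [Fintype.sum_prod_type]
      have hin : ∀ c₁ : V₁, (∑ c₂ : V₂, if c₁ = p.1 then ν₂ c₂ p.2 ^ 2 else 0)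
          = if c₁ = p.1 then (∑ c₂ : V₂, ν₂ c₂ p.2 ^ 2) else 0 := by
        intro c₁; split <;> simp
      rw [Finset.sum_congr rfl (fun c₁ _ => hin c₁),
        Finset.sum_ite_eq' Finset.univ p.1 (fun _ => ∑ c₂ : V₂, ν₂ c₂ p.2 ^ 2)]
      simp [hr₂ p.2]
    rw [e1, e2]
  refine ⟨part1, part2, part3, ?_⟩
  -- Part 4 : determinant
  intro g hg hg01 e
  have hcardV₁ : Fintype.card V₁ = 2 * n₁ := by
    have hpos := conn_rank_pos hcon₁ hconn₁ hcard₁ hr₁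
    have hhalf := half_split hcon₁ hr₁ (ne_of_gt hpos) hg₁ hg₁01
    have hsplit : Fintype.card {v : V₁ // g₁ v = 0} + Fintype.card {v : V₁ // g₁ v = 1}
        = Fintype.card V₁ := by
      rw [Fintype.card_subtype, Fintype.card_subtype]
      rw [show (Finset.filter (fun v => g₁ v = 1) Finset.univ)
          = Finset.filter (fun v => ¬ g₁ v = 0) Finset.univ from
        Finset.filter_congr (fun v _ => by rcases hg₁01 v with h | h <;> simp [h])]
      rw [Finset.card_filter_add_card_filter_not]
      exact Finset.card_univ
    omega
  have hcardV₂ : Fintype.card V₂ = 2 * n₂ := by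
    have hpos := conn_rank_pos hcon₂ hconn₂ hcard₂ hr₂
    have hhalf := half_split hcon₂ hr₂ (ne_of_gt hpos) hg₂ hg₂01
    have hsplit : Fintype.card {v : V₂ // g₂ v = 0} + Fintype.card {v : V₂ // g₂ v = 1}
        = Fintype.card V₂ := by
      rw [Fintype.card_subtype, Fintype.card_subtype]
      rw [show (Finset.filter (fun v => g₂ v = 1) Finset.univ)
          = Finset.filter (fun v => ¬ g₂ v = 0) Finset.univ from
        Finset.filter_congr (fun v _ => by rcases hg₂01 v with h | h <;> simp [h])]
      rw [Finset.card_filter_add_card_filter_not]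
      exact Finset.card_univ
    omega
  have hN : Fintype.card {p : V₁ × V₂ // g p = 0} = 2 * (n₁ * n₂) := by
    have hcongr := Fintype.card_congr e
    have hsplit : Fintype.card {p : V₁ × V₂ // g p = 0}
        + Fintype.card {p : V₁ × V₂ // g p = 1} = Fintype.card (V₁ × V₂) := by
      rw [Fintype.card_subtype, Fintype.card_subtype]
      rw [show (Finset.filter (fun p => g p = 1) Finset.univ)
          = Finset.filter (fun p => ¬ g p = 0) Finset.univ from
        Finset.filter_congr (fun p _ => by rcases hg01 p with h | h <;> simp [h])]
      rw [Finset.card_filter_add_card_filter_not]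
      exact Finset.card_univ
    rw [Fintype.card_prod, hcardV₁, hcardV₂] at hsplit
    have h4 : 2 * n₁ * (2 * n₂) = 4 * (n₁ * n₂) := by ring
    rw [h4] at hsplit
    omega
  have hdet2 := det_sq part1 part2 part3 hg hg01 e
  rw [hN] at hdet2
  set d := Matrix.det (Matrix.of fun (p q : {p : V₁ × V₂ // g p = 0}) =>
    prodConn f₁ ν₁ ν₂ p.1 (e q).1) with hd
  have hcast : ((r₁ : ℤ) + (r₂ : ℤ)) = ((r₁ + r₂ : ℕ) : ℤ) := by push_cast; ring
  rw [hcast] at hdet2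
  have habs : d.natAbs ^ 2 = ((r₁ + r₂) ^ (n₁ * n₂)) ^ 2 := by
    have := congrArg Int.natAbs hdet2
    rw [Int.natAbs_pow, Int.natAbs_pow, Int.natAbs_natCast] at this
    rw [this, ← pow_mul, Nat.mul_comm]
  exact Nat.pow_left_injective (by norm_num) habs
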